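/- Let C be a nonempty closed convex subset of a real Hilbert space H and T : C → CB(C) a quasi-nonexpansive multivalued mapping (F(T) ≠ ∅ and H(Tx, Tp) ≤ ‖x − p‖ for all x ∈ C, p ∈ F(T)) such that Tp = {p} for every p ∈ F(T). Then F(T) is closed and convex. -/

import Mathlib

open Set Metric

/-- For a quasi-nonexpansive multivalued mapping `T` on a closed convex subset
`C` of a real Hilbert space with `Tp = {p}` for every fixed point `p`, the
fixed point set `F(T)` is closed and convex. -/
theorem quasi_nonexpansive_fixedPointSet_closed_convex
    {H : Type*} [NormedAddCommGroup H] [InnerProductSpace ℝ H] [CompleteSpace H]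
    (C : Set H) (hC : C.Nonempty) (hCc : IsClosed C) (hCv : Convex ℝ C)
    (T : H → Set H)
    (hTval : ∀ x ∈ C, (T x).Nonempty ∧ T x ⊆ C ∧ IsClosed (T x) ∧
      Bornology.IsBounded (T x))
    (hFix : {x ∈ C | x ∈ T x}.Nonempty)
    (hqn : ∀ x ∈ C, ∀ p ∈ {x ∈ C | x ∈ T x},
      hausdorffDist (T x) (T p) ≤ ‖x - p‖)
    (hTp : ∀ p ∈ {x ∈ C | x ∈ T x}, T p = {p}) :
    IsClosed {x ∈ C | x ∈ T x} ∧ Convex ℝ {x ∈ C | x ∈ T x} := by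
  -- Key estimate: every point of `T x` is within `‖x - p‖` of any fixed point `p`.
  have key : ∀ x ∈ C, ∀ p ∈ {x ∈ C | x ∈ T x}, ∀ y ∈ T x, dist y p ≤ ‖x - p‖ := by
    intro x hx p hp y hy
    have hTx := hTval x hx
    have htop : EMetric.hausdorffEdist (T x) (T p) ≠ ⊤ := by
      rw [hTp p hp]
      exact Metric.hausdorffEdist_ne_top_of_nonempty_of_bounded hTx.1 ⟨p, rfl⟩
        hTx.2.2.2 Bornology.isBounded_singleton
    have h1 : Metric.infDist y (T p) ≤ Metric.hausdorffDist (T x) (T p) :=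
      Metric.infDist_le_hausdorffDist_of_mem hy htop
    have h2 := h1.trans (hqn x hx p hp)
    rwa [hTp p hp, Metric.infDist_singleton] at h2
  constructor
  · -- closedness
    apply IsSeqClosed.isClosed
    intro u x hu hx
    have hxC : x ∈ C := hCc.isSeqClosed (fun n => (hu n).1) hx
    refine ⟨hxC, ?_⟩
    obtain ⟨y₀, hy₀⟩ := (hTval x hxC).1
    have h : ∀ n, dist x y₀ ≤ 2 * dist x (u n) := by
      intro n
      have h1 : dist y₀ (u n) ≤ dist x (u n) := by
        rw [dist_eq_norm x (u n)]; exact key x hxC (u n) (hu n) y₀ hy₀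
      calc dist x y₀ ≤ dist x (u n) + dist (u n) y₀ := dist_triangle _ _ _
        _ ≤ dist x (u n) + dist x (u n) := by rw [dist_comm (u n) y₀]; linarith
        _ = 2 * dist x (u n) := by ring
    have hlim : Filter.Tendsto (fun n => 2 * dist x (u n)) Filter.atTop (nhds 0) := by
      have : Filter.Tendsto (fun n => dist x (u n)) Filter.atTop (nhds (dist x x)) :=
        Filter.Tendsto.dist tendsto_const_nhds hx
      simpa using this.const_mul 2
    have h0 : dist x y₀ ≤ 0 := ge_of_tendsto' hlim h
    have : y₀ = x := by
      have := le_antisymm h0 dist_nonneg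
      rw [dist_eq_zero] at this; exact this.symm
    rwa [this] at hy₀
  · -- convexity
    intro p hp q hq a b ha hb hab
    have ha' : a = 1 - b := by linarith
    subst ha'
    have hzC : (1 - b) • p + b • q ∈ C := hCv hp.1 hq.1 (by linarith) hb hab
    refine ⟨hzC, ?_⟩
    obtain ⟨y, hy⟩ := (hTval _ hzC).1
    set z := (1 - b) • p + b • q with hz
    have h1 : ‖y - p‖ ≤ b * ‖p - q‖ := by
      have h := key _ hzC p hp y hy
      rw [dist_eq_norm] at h
      have hzp : z - p = b • (q - p) := by rw [hz]; module
      calc ‖y - p‖ ≤ ‖z - p‖ := h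
        _ = b * ‖p - q‖ := by
            rw [hzp, norm_smul, Real.norm_eq_abs, abs_of_nonneg hb, norm_sub_rev]
    have h2 : ‖y - q‖ ≤ (1 - b) * ‖p - q‖ := by
      have h := key _ hzC q hq y hy
      rw [dist_eq_norm] at h
      have hzq : z - q = (1 - b) • (p - q) := by rw [hz]; module
      calc ‖y - q‖ ≤ ‖z - q‖ := h
        _ = (1 - b) * ‖p - q‖ := by
            rw [hzq, norm_smul, Real.norm_eq_abs, abs_of_nonneg (by linarith : (0:ℝ) ≤ 1 - b)]
    -- show y = z
    have hid : y - z = (1 - b) • (y - p) + b • (y - q) := by rw [hz]; module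
    have hinner : ‖(y - p) - (y - q)‖ ^ 2
        = ‖y - p‖ ^ 2 - 2 * inner ℝ (y - p) (y - q) + ‖y - q‖ ^ 2 :=
      norm_sub_sq_real _ _
    have hdiff : (y - p) - (y - q) = q - p := by abel
    have hsq : ‖y - z‖ ^ 2 ≤ 0 := by
      rw [hid, norm_add_sq_real, norm_smul, norm_smul, real_inner_smul_left,
        real_inner_smul_right, Real.norm_eq_abs, Real.norm_eq_abs,
        abs_of_nonneg hb, abs_of_nonneg (by linarith : (0:ℝ) ≤ 1 - b)]
      rw [hdiff, norm_sub_rev q p] at hinner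
      have h1sq : ‖y - p‖ ^ 2 ≤ b ^ 2 * ‖p - q‖ ^ 2 := by
        nlinarith [norm_nonneg (y - p), mul_nonneg hb (norm_nonneg (p - q))]
      have h2sq : ‖y - q‖ ^ 2 ≤ (1 - b) ^ 2 * ‖p - q‖ ^ 2 := by
        nlinarith [norm_nonneg (y - q),
          mul_nonneg (by linarith : (0:ℝ) ≤ 1 - b) (norm_nonneg (p - q))]
      nlinarith [mul_le_mul_of_nonneg_left h1sq (by linarith : (0:ℝ) ≤ 1 - b),
        mul_le_mul_of_nonneg_left h2sq hb, hinner, sq_nonneg ‖p - q‖,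
        mul_nonneg (by linarith : (0:ℝ) ≤ 1 - b) hb]
    have hyz : y = z := by
      have h0 : ‖y - z‖ = 0 := by nlinarith [norm_nonneg (y - z), sq_nonneg ‖y - z‖]
      rwa [norm_eq_zero, sub_eq_zero] at h0
    rwa [hyz] at hy
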